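/- Let $p>4$, $1<q<2$. Suppose $v\neq 0$ satisfies the Nehari identity $\mu F = A + \beta\|v\|^4 - P$ and the $N^+$ inequality $(p-1)P < A + 3\beta\|v\|^4 - (q-1)\mu F$, where $A \geq \alpha\delta\|v\|^2 > 0$, $P \geq 0$, $\beta>0$. Then $P \leq \frac{2-q}{p-q}A + \frac{4-q}{p-q}\beta\|v\|^4$, and the energy $J = (\frac12-\frac1q)A + (\frac14-\frac1q)\beta\|v\|^4 + (\frac1q-\frac1p)P$ satisfies $J \leq -\frac{(2-q)(p-2)}{2pq}A - \frac{(4-q)(p-4)}{4pq}\beta\|v\|^4 < 0$. -/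
import Mathlib


/-- For `v ∈ N⁺`, after eliminating the sublinear term via the
Nehari identity, `P ≤ ((2-q)/(p-q))A + ((4-q)/(p-q))β‖v‖⁴` and the energy
`J = (1/2 - 1/q)A + (1/4 - 1/q)β‖v‖⁴ + (1/q - 1/p)P` satisfies
`J ≤ -((2-q)(p-2)/(2pq))A - ((4-q)(p-4)/(4pq))β‖v‖⁴ < 0`. -/
theorem stmt14 {E : Type*} [NormedAddCommGroup E] [NormedSpace ℝ E]
    (p q α δ β A P mF : ℝ) (v : E) (hp : 4 < p) (hq1 : 1 < q) (hq2 : q < 2)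
    (hα : 0 < α) (hδ : 0 < δ) (hβ : 0 < β) (hv : v ≠ 0)
    (hA : α * δ * ‖v‖ ^ 2 ≤ A) (hP : 0 ≤ P)
    (hNehari : mF = A + β * ‖v‖ ^ 4 - P)
    (hNplus : (p - 1) * P < A + 3 * β * ‖v‖ ^ 4 - (q - 1) * mF) :
    P ≤ (2 - q) / (p - q) * A + (4 - q) / (p - q) * (β * ‖v‖ ^ 4) ∧
    (1 / 2 - 1 / q) * A + (1 / 4 - 1 / q) * (β * ‖v‖ ^ 4) + (1 / q - 1 / p) * P
      ≤ -((2 - q) * (p - 2) / (2 * p * q)) * A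
        - ((4 - q) * (p - 4) / (4 * p * q)) * (β * ‖v‖ ^ 4) ∧
    (1 / 2 - 1 / q) * A + (1 / 4 - 1 / q) * (β * ‖v‖ ^ 4) + (1 / q - 1 / p) * P < 0 := by
  have hv' : (0:ℝ) < ‖v‖ := norm_pos_iff.mpr hv
  have hA0 : 0 < A := lt_of_lt_of_le (by positivity) hA
  have hB0 : 0 < β * ‖v‖ ^ 4 := by positivity
  have hq0 : (0:ℝ) < q := by linarith
  have hp0 : (0:ℝ) < p := by linarith
  have hpq : (0:ℝ) < p - q := by linarith
  have key : (p - q) * P < (2 - q) * A + (4 - q) * (β * ‖v‖ ^ 4) := by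
    subst hNehari; nlinarith [hNplus]
  have h1 : P ≤ (2 - q) / (p - q) * A + (4 - q) / (p - q) * (β * ‖v‖ ^ 4) := by
    rw [div_mul_eq_mul_div, div_mul_eq_mul_div, ← add_div, le_div_iff₀ hpq]
    nlinarith [key]
  refine ⟨h1, ?_, ?_⟩
  · have hcoef : (0:ℝ) ≤ 1 / q - 1 / p := by
      rw [sub_nonneg]
      exact div_le_div_of_nonneg_left (by norm_num) hq0 (by linarith)
    have h2 := mul_le_mul_of_nonneg_left h1 hcoef
    have hid : (1 / 2 - 1 / q) * A + (1 / 4 - 1 / q) * (β * ‖v‖ ^ 4)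
        + (1 / q - 1 / p) * ((2 - q) / (p - q) * A + (4 - q) / (p - q) * (β * ‖v‖ ^ 4))
        = -((2 - q) * (p - 2) / (2 * p * q)) * A
          - ((4 - q) * (p - 4) / (4 * p * q)) * (β * ‖v‖ ^ 4) := by
      field_simp
      ring
    linarith
  · have hc1 : 0 < (2 - q) * (p - 2) / (2 * p * q) :=
      div_pos (mul_pos (by linarith) (by linarith)) (by positivity)
    have hc2 : 0 < (4 - q) * (p - 4) / (4 * p * q) :=
      div_pos (mul_pos (by linarith) (by linarith)) (by positivity)
    have hcoef : (0:ℝ) ≤ 1 / q - 1 / p := by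
      rw [sub_nonneg]
      exact div_le_div_of_nonneg_left (by norm_num) hq0 (by linarith)
    have h2 := mul_le_mul_of_nonneg_left h1 hcoef
    have hid : (1 / 2 - 1 / q) * A + (1 / 4 - 1 / q) * (β * ‖v‖ ^ 4)
        + (1 / q - 1 / p) * ((2 - q) / (p - q) * A + (4 - q) / (p - q) * (β * ‖v‖ ^ 4))
        = -((2 - q) * (p - 2) / (2 * p * q)) * A
          - ((4 - q) * (p - 4) / (4 * p * q)) * (β * ‖v‖ ^ 4) := by
      field_simp
      ring
    nlinarith [mul_pos hc1 hA0, mul_pos hc2 hB0]
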